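/- Let n ≥ 7 and let g = g^2_{(n,1)} be the complex Lie algebra with basis e_1,…,e_n and nonzero brackets [e_1,e_i] = e_{i+1} for 2 ≤ i ≤ n−2 and [e_i,e_n] = e_{i+2} for 2 ≤ i ≤ n−3. If φ is a 1/2-derivation of g, then φ(e_i) = α_1 e_i for 4 ≤ i ≤ n−1, where α_1 is the coefficient of e_1 in φ(e_1); moreover the coefficient of e_1 in φ(e_2) and in φ(e_n) is zero. -/

import Mathlib

section
variable {n : ℕ} {L : Type*} [LieRing L] [LieAlgebra ℂ L]

noncomputable def gco (b : Module.Basis (Fin n) ℂ L) (m : ℕ) (x : L) : ℂ :=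
  if h : m - 1 < n then b.repr x ⟨m - 1, h⟩ else 0

lemma gco_eq (b : Module.Basis (Fin n) ℂ L) (m : ℕ) (x : L) (h : m - 1 < n) :
    gco b m x = b.repr x ⟨m - 1, h⟩ := dif_pos h

lemma gco_add (b : Module.Basis (Fin n) ℂ L) (m : ℕ) (x y : L) :
    gco b m (x + y) = gco b m x + gco b m y := by
  unfold gco; split <;> simp

lemma gco_smul (b : Module.Basis (Fin n) ℂ L) (m : ℕ) (t : ℂ) (x : L) :
    gco b m (t • x) = t * gco b m x := by
  unfold gco; split <;> simp

lemma gco_zero (b : Module.Basis (Fin n) ℂ L) (m : ℕ) : gco b m (0 : L) = 0 := by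
  unfold gco; split <;> simp

lemma gco_neg (b : Module.Basis (Fin n) ℂ L) (m : ℕ) (x : L) : gco b m (-x) = - gco b m x := by
  unfold gco; split <;> simp

lemma gco_sub (b : Module.Basis (Fin n) ℂ L) (m : ℕ) (x y : L) :
    gco b m (x - y) = gco b m x - gco b m y := by
  unfold gco; split <;> simp

lemma gco_basis (b : Module.Basis (Fin n) ℂ L) (m : ℕ) (hm : 1 ≤ m) (i : Fin n) :
    gco b m (b i) = if m = i.1 + 1 then 1 else 0 := by
  unfold gco
  split
  · rename_i h
    rw [Module.Basis.repr_self, Finsupp.single_apply]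
    by_cases hmi : m = i.1 + 1
    · have hi : i = (⟨m - 1, h⟩ : Fin n) := Fin.ext (by simp; omega)
      rw [if_pos hi, if_pos hmi]
    · have hi : i ≠ (⟨m - 1, h⟩ : Fin n) := by
        intro hh; apply hmi; rw [hh]; simp; omega
      rw [if_neg hi, if_neg hmi]
  · rename_i h
    have : ¬ m = i.1 + 1 := by have := i.2; omega
    simp [this]

lemma gco_sum (b : Module.Basis (Fin n) ℂ L) (m : ℕ) (s : Finset (Fin n)) (f : Fin n → L) :
    gco b m (∑ i ∈ s, f i) = ∑ i ∈ s, gco b m (f i) := by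
  unfold gco; split <;> simp

lemma sum_lie' {ι : Type*} (s : Finset ι) (f : ι → L) (y : L) :
    ⁅∑ i ∈ s, f i, y⁆ = ∑ i ∈ s, ⁅f i, y⁆ := by
  classical
  induction s using Finset.induction with
  | empty => simp
  | insert a s h ih => simp [Finset.sum_insert h, add_lie, ih]

lemma lie_sum' {ι : Type*} (s : Finset ι) (f : ι → L) (y : L) :
    ⁅y, ∑ i ∈ s, f i⁆ = ∑ i ∈ s, ⁅y, f i⁆ := by
  classical
  induction s using Finset.induction with
  | empty => simp
  | insert a s h ih => simp [Finset.sum_insert h, lie_add, ih]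

lemma my_smul_ite (t : ℂ) (c : Prop) [Decidable c] (x y : L) :
    t • (if c then x else y) = if c then t • x else t • y := by split <;> rfl

end
set_option maxHeartbeats 1000000 in
/-- For n ≥ 7, any 1/2-derivation of g^2_{(n,1)} satisfies φ(e_i) = α₁ e_i for
4 ≤ i ≤ n−1, where α₁ is the coefficient of e_1 in φ(e_1); moreover the
coefficient of e_1 in φ(e_2) and in φ(e_n) is zero. -/
theorem g2n1_half_derivation_middle
    (n : ℕ) (hn : 7 ≤ n)
    (L : Type*) [LieRing L] [LieAlgebra ℂ L]
    (e : ℕ → L) (b : Module.Basis (Fin n) ℂ L)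
    (hb : ∀ i : Fin n, e (i.1 + 1) = b i)
    (htab : ∀ i j : ℕ, 1 ≤ i → i < j → j ≤ n →
      ⁅e i, e j⁆ =
        if i = 1 ∧ 2 ≤ j ∧ j ≤ n - 2 then e (j + 1)
        else if j = n ∧ 2 ≤ i ∧ i ≤ n - 3 then e (i + 2)
        else 0)
    (φ : L →ₗ[ℂ] L)
    (hφ : ∀ x y : L, φ ⁅x, y⁆ = (2 : ℂ)⁻¹ • (⁅φ x, y⁆ + ⁅x, φ y⁆)) :
    (∀ i : ℕ, 4 ≤ i → i ≤ n - 1 →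
      φ (e i) = (b.repr (φ (e 1)) ⟨0, by omega⟩) • e i) ∧
    b.repr (φ (e 2)) ⟨0, by omega⟩ = 0 ∧
    b.repr (φ (e n)) ⟨0, by omega⟩ = 0 := by
  classical
  have he : ∀ k, 1 ≤ k → ∀ h : k - 1 < n, e k = b ⟨k - 1, h⟩ := by
    intro k hk h
    have := hb ⟨k - 1, h⟩
    simpa [Nat.sub_add_cancel hk] using this.symm |>.symm
  -- full multiplication table
  have htab' : ∀ i j : ℕ, 1 ≤ i → i ≤ n → 1 ≤ j → j ≤ n →
      ⁅e i, e j⁆ =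
        if i = 1 ∧ 2 ≤ j ∧ j ≤ n - 2 then e (j + 1)
        else if j = n ∧ 2 ≤ i ∧ i ≤ n - 3 then e (i + 2)
        else if j = 1 ∧ 2 ≤ i ∧ i ≤ n - 2 then -e (i + 1)
        else if i = n ∧ 2 ≤ j ∧ j ≤ n - 3 then -e (j + 2)
        else 0 := by
    intro i j h1 h2 h3 h4
    rcases lt_trichotomy i j with h | h | h
    · rw [htab i j h1 h h4]
      split_ifs <;> first | rfl | (exfalso; omega)
    · subst h
      have : ⁅e i, e i⁆ = 0 := lie_self _
      rw [this]
      split_ifs <;> first | rfl | (exfalso; omega)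
    · have hskew : ⁅e i, e j⁆ = -⁅e j, e i⁆ := (lie_skew _ _).symm
      rw [hskew, htab j i h3 h h2]
      split_ifs <;> first | (exfalso; omega) | simp
  have h0n : (0:ℕ) < n := by omega
  have hn1 : n - 1 < n := by omega
  have hexp1 : ∀ x y : L, ⁅x, y⁆ = ∑ i, b.repr x i • ⁅b i, y⁆ := by
    intro x y
    conv_lhs => rw [← b.sum_repr x]
    rw [sum_lie']
    exact Finset.sum_congr rfl fun i _ => smul_lie _ _ _
  have hexp2 : ∀ x y : L, ⁅y, x⁆ = ∑ i, b.repr x i • ⁅y, b i⁆ := by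
    intro x y
    conv_lhs => rw [← b.sum_repr x]
    rw [lie_sum']
    exact Finset.sum_congr rfl fun i _ => lie_smul _ _ _
  -- bracket of a general element with e j, 2 ≤ j ≤ n-3
  have hL1 : ∀ j, 2 ≤ j → j ≤ n - 3 → ∀ x : L,
      ⁅x, e j⁆ = gco b 1 x • e (j+1) - gco b n x • e (j+2) := by
    intro j hj1 hj2 x
    have tbl : ∀ i : Fin n, ⁅b i, e j⁆ =
        (if i = (⟨0, h0n⟩ : Fin n) then e (j+1) else 0) +
        (if i = (⟨n-1, hn1⟩ : Fin n) then -e (j+2) else 0) := by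
      intro i
      rw [← hb i, htab' (i.1+1) j (by omega) (by omega) (by omega) (by omega)]
      rcases Nat.lt_trichotomy i.1 0 with hi | hi | hi
      · omega
      · rw [if_pos (show i.1+1 = 1 ∧ 2 ≤ j ∧ j ≤ n-2 by omega),
            if_pos (show i = (⟨0, h0n⟩ : Fin n) from Fin.ext (by simp [hi])),
            if_neg (show i ≠ (⟨n-1, hn1⟩ : Fin n) by
              intro hh; have := congrArg Fin.val hh; simp at this; omega)]
        simp
      · by_cases hi2 : i.1 = n - 1
        · rw [if_neg (by omega), if_neg (by omega), if_neg (by omega),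
              if_pos (show i.1+1 = n ∧ 2 ≤ j ∧ j ≤ n-3 by omega),
              if_neg (show i ≠ (⟨0, h0n⟩ : Fin n) by
                intro hh; have := congrArg Fin.val hh; simp at this; omega),
              if_pos (show i = (⟨n-1, hn1⟩ : Fin n) from Fin.ext (by simp [hi2]))]
          simp
        · have := i.2
          rw [if_neg (by omega), if_neg (by omega), if_neg (by omega), if_neg (by omega),
              if_neg (show i ≠ (⟨0, h0n⟩ : Fin n) by
                intro hh; have := congrArg Fin.val hh; simp at this; omega),
              if_neg (show i ≠ (⟨n-1, hn1⟩ : Fin n) by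
                intro hh; have := congrArg Fin.val hh; simp at this; omega)]
          simp
    rw [hexp1 x (e j)]
    simp only [tbl, smul_add, my_smul_ite, smul_zero, Finset.sum_add_distrib,
      Finset.sum_ite_eq', Finset.mem_univ, if_true]
    rw [gco_eq b 1 x (by omega), gco_eq b n x (by omega)]
    rw [smul_neg, ← sub_eq_add_neg]
  have hL2 : ∀ x : L, ⁅x, e (n-2)⁆ = gco b 1 x • e (n-1) := by
    intro x
    have tbl : ∀ i : Fin n, ⁅b i, e (n-2)⁆ =
        (if i = (⟨0, h0n⟩ : Fin n) then e (n-1) else 0) := by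
      intro i
      rw [← hb i, htab' (i.1+1) (n-2) (by omega) (by omega) (by omega) (by omega)]
      by_cases hi : i.1 = 0
      · rw [if_pos (show i.1+1 = 1 ∧ 2 ≤ n-2 ∧ n-2 ≤ n-2 by omega),
            if_pos (show i = (⟨0, h0n⟩ : Fin n) from Fin.ext (by simp [hi]))]
        have h : n - 2 + 1 = n - 1 := by omega
        rw [h]
      · have := i.2
        rw [if_neg (by omega), if_neg (by omega), if_neg (by omega), if_neg (by omega),
            if_neg (show i ≠ (⟨0, h0n⟩ : Fin n) by
              intro hh; have := congrArg Fin.val hh; simp at this; omega)]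
    rw [hexp1 x (e (n-2))]
    simp only [tbl, my_smul_ite, smul_zero, Finset.sum_ite_eq', Finset.mem_univ, if_true]
    rw [gco_eq b 1 x (by omega)]
  have hL3 : ∀ x : L, ⁅x, e (n-1)⁆ = 0 := by
    intro x
    have tbl : ∀ i : Fin n, ⁅b i, e (n-1)⁆ = 0 := by
      intro i
      rw [← hb i, htab' (i.1+1) (n-1) (by omega) (by omega) (by omega) (by omega)]
      have := i.2
      rw [if_neg (by omega), if_neg (by omega), if_neg (by omega), if_neg (by omega)]
    rw [hexp1 x (e (n-1))]
    simp only [tbl, smul_zero, Finset.sum_const_zero]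
  have hL5 : ∀ i, 2 ≤ i → i ≤ n - 3 → ∀ x : L,
      ⁅e i, x⁆ = - (gco b 1 x • e (i+1)) + gco b n x • e (i+2) := by
    intro i hi1 hi2 x
    have tbl : ∀ m : Fin n, ⁅e i, b m⁆ =
        (if m = (⟨0, h0n⟩ : Fin n) then -e (i+1) else 0) +
        (if m = (⟨n-1, hn1⟩ : Fin n) then e (i+2) else 0) := by
      intro m
      rw [← hb m, htab' i (m.1+1) (by omega) (by omega) (by omega) (by omega)]
      by_cases hm : m.1 = 0
      · rw [if_neg (by omega), if_neg (by omega),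
            if_pos (show m.1+1 = 1 ∧ 2 ≤ i ∧ i ≤ n-2 by omega),
            if_pos (show m = (⟨0, h0n⟩ : Fin n) from Fin.ext (by simp [hm])),
            if_neg (show m ≠ (⟨n-1, hn1⟩ : Fin n) by
              intro hh; have := congrArg Fin.val hh; simp at this; omega)]
        simp
      · by_cases hm2 : m.1 = n - 1
        · rw [if_neg (by omega),
              if_pos (show m.1+1 = n ∧ 2 ≤ i ∧ i ≤ n-3 by omega),
              if_neg (show m ≠ (⟨0, h0n⟩ : Fin n) by
                intro hh; have := congrArg Fin.val hh; simp at this; omega),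
              if_pos (show m = (⟨n-1, hn1⟩ : Fin n) from Fin.ext (by simp [hm2]))]
          simp
        · have := m.2
          rw [if_neg (by omega), if_neg (by omega), if_neg (by omega), if_neg (by omega),
              if_neg (show m ≠ (⟨0, h0n⟩ : Fin n) by
                intro hh; have := congrArg Fin.val hh; simp at this; omega),
              if_neg (show m ≠ (⟨n-1, hn1⟩ : Fin n) by
                intro hh; have := congrArg Fin.val hh; simp at this; omega)]
          simp
    rw [hexp2 x (e i)]
    simp only [tbl, smul_add, my_smul_ite, smul_zero, Finset.sum_add_distrib,
      Finset.sum_ite_eq', Finset.mem_univ, if_true]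
    rw [gco_eq b 1 x (by omega), gco_eq b n x (by omega)]
    rw [smul_neg]
  have hS1 : ∀ m, 1 ≤ m → ∀ x : L,
      gco b m ⁅e 1, x⁆ = if 3 ≤ m ∧ m ≤ n - 1 then gco b (m-1) x else 0 := by
    intro m hm x
    have tbl : ∀ i : Fin n, ⁅e 1, b i⁆ =
        if 2 ≤ i.1+1 ∧ i.1+1 ≤ n-2 then e (i.1+2) else 0 := by
      intro i
      rw [← hb i, htab' 1 (i.1+1) (by omega) (by omega) (by omega) (by omega)]
      by_cases hc : 2 ≤ i.1+1 ∧ i.1+1 ≤ n-2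
      · rw [if_pos ⟨rfl, hc⟩, if_pos hc]
      · have := i.2
        rw [if_neg (fun h => hc h.2), if_neg (by omega), if_neg (by omega),
            if_neg (by omega), if_neg hc]
    rw [hexp2 x (e 1), gco_sum]
    simp only [gco_smul, tbl]
    by_cases hm3 : 3 ≤ m ∧ m ≤ n - 1
    · rw [if_pos hm3]
      have him : m - 2 < n := by omega
      have key : ∀ i : Fin n,
          b.repr x i * gco b m (if 2 ≤ i.1+1 ∧ i.1+1 ≤ n-2 then e (i.1+2) else 0)
          = if i = (⟨m-2, him⟩ : Fin n) then b.repr x i else 0 := by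
        intro i
        by_cases hi : i = (⟨m-2, him⟩ : Fin n)
        · subst hi
          rw [if_pos (by simp <;> omega), if_pos (by simp <;> omega)]
          rw [show ((⟨m-2, him⟩ : Fin n)).1 = m - 2 from rfl]
          rw [he (m-2+2) (by omega) (by omega), gco_basis b m hm,
              if_pos (show m = m-2+2-1+1 by omega), mul_one]
        · rw [if_neg hi]
          have hne : i.1 ≠ m - 2 := fun hh => hi (Fin.ext hh)
          by_cases hc : 2 ≤ i.1+1 ∧ i.1+1 ≤ n-2
          · rw [if_pos hc, he (i.1+2) (by omega) (by omega), gco_basis b m hm,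
                if_neg (show ¬ m = i.1+2-1+1 by omega), mul_zero]
          · rw [if_neg hc, gco_zero, mul_zero]
      rw [Finset.sum_congr rfl (fun i _ => key i), Finset.sum_ite_eq']
      simp only [Finset.mem_univ, if_true]
      rw [gco_eq b (m-1) x (by omega)]
      exact congrArg (b.repr x) (Fin.ext (by simp <;> omega))
    · rw [if_neg hm3]
      have key : ∀ i : Fin n,
          b.repr x i * gco b m (if 2 ≤ i.1+1 ∧ i.1+1 ≤ n-2 then e (i.1+2) else 0) = 0 := by
        intro i
        by_cases hc : 2 ≤ i.1+1 ∧ i.1+1 ≤ n-2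
        · rw [if_pos hc, he (i.1+2) (by omega) (by omega), gco_basis b m hm,
              if_neg (show ¬ m = i.1+2-1+1 by omega), mul_zero]
        · rw [if_neg hc, gco_zero, mul_zero]
      rw [Finset.sum_congr rfl (fun i _ => key i), Finset.sum_const_zero]
  have hS2 : ∀ m, 1 ≤ m → ∀ x : L,
      gco b m ⁅x, e n⁆ = if 4 ≤ m ∧ m ≤ n - 1 then gco b (m-2) x else 0 := by
    intro m hm x
    have tbl : ∀ i : Fin n, ⁅b i, e n⁆ =
        if 2 ≤ i.1+1 ∧ i.1+1 ≤ n-3 then e (i.1+3) else 0 := by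
      intro i
      rw [← hb i, htab' (i.1+1) n (by omega) (by omega) (by omega) (by omega)]
      by_cases hc : 2 ≤ i.1+1 ∧ i.1+1 ≤ n-3
      · rw [if_neg (by omega), if_pos ⟨rfl, hc⟩, if_pos hc]
      · have := i.2
        rw [if_neg (by omega), if_neg (fun h => hc h.2), if_neg (by omega),
            if_neg (by omega), if_neg hc]
    rw [hexp1 x (e n), gco_sum]
    simp only [gco_smul, tbl]
    by_cases hm3 : 4 ≤ m ∧ m ≤ n - 1
    · rw [if_pos hm3]
      have him : m - 3 < n := by omega
      have key : ∀ i : Fin n,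
          b.repr x i * gco b m (if 2 ≤ i.1+1 ∧ i.1+1 ≤ n-3 then e (i.1+3) else 0)
          = if i = (⟨m-3, him⟩ : Fin n) then b.repr x i else 0 := by
        intro i
        by_cases hi : i = (⟨m-3, him⟩ : Fin n)
        · subst hi
          rw [if_pos (by simp <;> omega), if_pos (by simp <;> omega)]
          rw [show ((⟨m-3, him⟩ : Fin n)).1 = m - 3 from rfl]
          rw [he (m-3+3) (by omega) (by omega), gco_basis b m hm,
              if_pos (show m = m-3+3-1+1 by omega), mul_one]
        · rw [if_neg hi]
          have hne : i.1 ≠ m - 3 := fun hh => hi (Fin.ext hh)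
          by_cases hc : 2 ≤ i.1+1 ∧ i.1+1 ≤ n-3
          · rw [if_pos hc, he (i.1+3) (by omega) (by omega), gco_basis b m hm,
                if_neg (show ¬ m = i.1+3-1+1 by omega), mul_zero]
          · rw [if_neg hc, gco_zero, mul_zero]
      rw [Finset.sum_congr rfl (fun i _ => key i), Finset.sum_ite_eq']
      simp only [Finset.mem_univ, if_true]
      rw [gco_eq b (m-2) x (by omega)]
      exact congrArg (b.repr x) (Fin.ext (by simp <;> omega))
    · rw [if_neg hm3]
      have key : ∀ i : Fin n,
          b.repr x i * gco b m (if 2 ≤ i.1+1 ∧ i.1+1 ≤ n-3 then e (i.1+3) else 0) = 0 := by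
        intro i
        by_cases hc : 2 ≤ i.1+1 ∧ i.1+1 ≤ n-3
        · rw [if_pos hc, he (i.1+3) (by omega) (by omega), gco_basis b m hm,
              if_neg (show ¬ m = i.1+3-1+1 by omega), mul_zero]
        · rw [if_neg hc, gco_zero, mul_zero]
      rw [Finset.sum_congr rfl (fun i _ => key i), Finset.sum_const_zero]
  have hdouble : ∀ u v : L, u = (2:ℂ)⁻¹ • v → v = (2:ℂ) • u := by
    intro u v h; rw [h, smul_smul]; norm_num
  -- recursion from [e1, e_{k-1}] = e_k
  have hA : ∀ k, 3 ≤ k → k ≤ n-1 → ∀ m, 1 ≤ m →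
      2 * gco b m (φ (e k)) =
        (if m = k then gco b 1 (φ (e 1)) else 0)
        - (if m = k+1 ∧ k ≤ n-2 then gco b n (φ (e 1)) else 0)
        + (if 3 ≤ m ∧ m ≤ n-1 then gco b (m-1) (φ (e (k-1))) else 0) := by
    intro k hk1 hk2 m hm
    have hbr : ⁅e 1, e (k-1)⁆ = e k := by
      rw [htab 1 (k-1) le_rfl (by omega) (by omega),
          if_pos (show (1:ℕ) = 1 ∧ 2 ≤ k-1 ∧ k-1 ≤ n-2 by omega)]
      exact congrArg e (by omega)
    have h := hφ (e 1) (e (k-1))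
    rw [hbr] at h
    have h2 := hdouble _ _ h
    have hcm := congrArg (gco b m) h2
    rw [gco_smul, gco_add, hS1 m hm] at hcm
    by_cases hc : k ≤ n - 2
    · rw [hL1 (k-1) (by omega) (by omega) (φ (e 1)), gco_sub, gco_smul, gco_smul,
          he (k-1+1) (by omega) (by omega), he (k-1+2) (by omega) (by omega),
          gco_basis b m hm, gco_basis b m hm] at hcm
      rw [← hcm]
      by_cases h5 : m = k
      · rw [if_pos (show m = k-1+1-1+1 by omega), if_pos h5,
            if_neg (show ¬(m = k+1 ∧ k ≤ n-2) by omega),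
            if_neg (show ¬ m = k-1+2-1+1 by omega), mul_one, mul_zero]
        try ring
      · rw [if_neg (show ¬ m = k-1+1-1+1 by omega), if_neg h5, mul_zero]
        by_cases h6 : m = k+1
        · rw [if_pos (show m = k-1+2-1+1 by omega), if_pos (show m = k+1 ∧ k ≤ n-2 from ⟨h6, hc⟩), mul_one]
          try ring
        · rw [if_neg (show ¬ m = k-1+2-1+1 by omega),
              if_neg (show ¬(m = k+1 ∧ k ≤ n-2) by tauto), mul_zero]
          try ring
    · have hk' : k - 1 = n - 2 := by omega
      have hL2' : ⁅φ (e 1), e (k-1)⁆ = gco b 1 (φ (e 1)) • e (n-1) := by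
        rw [hk']; exact hL2 _
      rw [hL2', gco_smul, he (n-1) (by omega) (by omega),
          gco_basis b m hm] at hcm
      rw [← hcm]
      by_cases h5 : m = k
      · rw [if_pos (show m = n-1-1+1 by omega), if_pos h5,
            if_neg (show ¬(m = k+1 ∧ k ≤ n-2) by omega), mul_one]
        try ring
      · rw [if_neg (show ¬ m = n-1-1+1 by omega), if_neg h5,
            if_neg (show ¬(m = k+1 ∧ k ≤ n-2) by omega), mul_zero]
        try ring
  -- recursion from [e_{k-2}, e_n] = e_k
  have hB : ∀ k, 4 ≤ k → k ≤ n-1 → ∀ m, 1 ≤ m →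
      2 * gco b m (φ (e k)) =
        - (if m = k-1 then gco b 1 (φ (e n)) else 0)
        + (if m = k then gco b n (φ (e n)) else 0)
        + (if 4 ≤ m ∧ m ≤ n-1 then gco b (m-2) (φ (e (k-2))) else 0) := by
    intro k hk1 hk2 m hm
    have hbr : ⁅e (k-2), e n⁆ = e k := by
      rw [htab (k-2) n (by omega) (by omega) le_rfl, if_neg (by omega),
          if_pos (show n = n ∧ 2 ≤ k-2 ∧ k-2 ≤ n-3 by omega)]
      exact congrArg e (by omega)
    have h := hφ (e (k-2)) (e n)
    rw [hbr] at h
    have h2 := hdouble _ _ h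
    have hcm := congrArg (gco b m) h2
    rw [gco_smul, gco_add, hS2 m hm,
        hL5 (k-2) (by omega) (by omega) (φ (e n)), gco_add, gco_neg, gco_smul, gco_smul,
        he (k-2+1) (by omega) (by omega), he (k-2+2) (by omega) (by omega),
        gco_basis b m hm, gco_basis b m hm] at hcm
    rw [← hcm]
    by_cases h5 : m = k-1
    · rw [if_pos (show m = k-2+1-1+1 by omega), if_pos h5,
          if_neg (show ¬ m = k-2+2-1+1 by omega), if_neg (show ¬ m = k by omega),
          mul_one, mul_zero]
      try ring
    · rw [if_neg (show ¬ m = k-2+1-1+1 by omega), if_neg h5, mul_zero]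
      by_cases h6 : m = k
      · rw [if_pos (show m = k-2+2-1+1 by omega), if_pos h6, mul_one]
        try ring
      · rw [if_neg (show ¬ m = k-2+2-1+1 by omega), if_neg h6, mul_zero]
        try ring
  -- row n-1 vanishing
  have hC : ∀ j, 2 ≤ j → j ≤ n-2 → gco b j (φ (e (n-1))) = 0 := by
    intro j hj1 hj2
    have hbr : ⁅e 1, e (n-1)⁆ = 0 := by
      rw [htab 1 (n-1) le_rfl (by omega) (by omega), if_neg (by omega), if_neg (by omega)]
    have h := hφ (e 1) (e (n-1))
    rw [hbr, map_zero, hL3 (φ (e 1)), zero_add] at h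
    have h2 := hdouble _ _ h
    rw [smul_zero] at h2
    have hcj := congrArg (gco b (j+1)) h2
    rw [hS1 (j+1) (by omega), if_pos (by omega), gco_zero] at hcj
    simp only [Nat.add_sub_cancel] at hcj
    exact hcj
  -- coefficient of e1 in φ(e2)
  have hE2 : gco b 1 (φ (e 2)) = 0 := by
    have hbr : ⁅e 2, e (n-2)⁆ = 0 := by
      rw [htab 2 (n-2) (by omega) (by omega) (by omega), if_neg (by omega), if_neg (by omega)]
    have h := hφ (e 2) (e (n-2))
    rw [hbr, map_zero, hL2 (φ (e 2)), hL5 2 (by omega) (by omega) (φ (e (n-2)))] at h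
    have h2 := hdouble _ _ h
    rw [smul_zero] at h2
    have hcj := congrArg (gco b (n-1)) h2
    rw [gco_add, gco_add, gco_neg, gco_smul, gco_smul, gco_smul,
        he (n-1) (by omega) (by omega), he (2+1) (by omega) (by omega),
        he (2+2) (by omega) (by omega),
        gco_basis b (n-1) (by omega), gco_basis b (n-1) (by omega),
        gco_basis b (n-1) (by omega),
        if_pos (show n-1 = n-1-1+1 by omega),
        if_neg (show ¬ n-1 = 2+1-1+1 by omega),
        if_neg (show ¬ n-1 = 2+2-1+1 by omega), mul_one, mul_zero, mul_zero, gco_zero] at hcj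
    linear_combination hcj
  -- Z1 : columns 1, 2, n vanish for rows 3..n-1
  have Z1 : ∀ k, 3 ≤ k → k ≤ n-1 →
      gco b 1 (φ (e k)) = 0 ∧ gco b 2 (φ (e k)) = 0 ∧ gco b n (φ (e k)) = 0 := by
    intro k h1 h2
    refine ⟨?_, ?_, ?_⟩
    · have h := hA k h1 h2 1 le_rfl
      rw [if_neg (by omega), if_neg (by omega), if_neg (by omega)] at h
      linear_combination h / 2
    · have h := hA k h1 h2 2 (by omega)
      rw [if_neg (by omega), if_neg (by omega), if_neg (by omega)] at h
      linear_combination h / 2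
    · have h := hA k h1 h2 n (by omega)
      rw [if_neg (by omega), if_neg (by omega), if_neg (by omega)] at h
      linear_combination h / 2
  -- Z2 : generic off-near-diagonal vanishing
  have Z2 : ∀ i j, 2 ≤ i → i ≤ n-3 → 2 ≤ j → j ≤ n-3 → j+1 ≠ i → j ≠ i → j ≠ i+1 →
      gco b j (φ (e i)) = 0 ∧ gco b (j+2) (φ (e (i+2))) = 0 := by
    intro i j hi1 hi2 hj1 hj2 hji1 hji2 hji3
    have h1 := hA (i+1) (by omega) (by omega) (j+1) (by omega)
    rw [if_neg (by omega), if_neg (by omega), if_pos (by omega)] at h1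
    rw [(show i+1-1 = i by omega), (show j+1-1 = j by omega)] at h1
    have h2 := hA (i+2) (by omega) (by omega) (j+2) (by omega)
    rw [if_neg (by omega), if_neg (by omega), if_pos (by omega)] at h2
    rw [(show i+2-1 = i+1 by omega), (show j+2-1 = j+1 by omega)] at h2
    have h3 := hB (i+2) (by omega) (by omega) (j+2) (by omega)
    rw [if_neg (by omega), if_neg (by omega), if_pos (by omega)] at h3
    rw [(show i+2-2 = i by omega), (show j+2-2 = j by omega)] at h3
    have hz : gco b j (φ (e i)) = 0 := by linear_combination h1 + 2*h2 - 2*h3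
    exact ⟨hz, by linear_combination h3/2 + hz/2⟩
  -- γ = 0
  have h32 : gco b 2 (φ (e 3)) = 0 := (Z1 3 (by omega) (by omega)).2.1
  have h43 : gco b 3 (φ (e 4)) = 0 := by
    have h := hA 4 (by omega) (by omega) 3 (by omega)
    rw [if_neg (by omega), if_neg (by omega), if_pos (by omega)] at h
    norm_num at h
    linear_combination h/2 + h32/2
  have hγ : gco b 1 (φ (e n)) = 0 := by
    have h := hB 4 (by omega) (by omega) 3 (by omega)
    rw [if_pos (by omega), if_neg (by omega), if_neg (by omega)] at h
    linear_combination h - 2*h43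
  -- subdiagonal vanishes
  have hpair : ∀ i, 3 ≤ i → i ≤ n-3 →
      gco b (i-1) (φ (e i)) = 0 ∧ gco b (i+1) (φ (e (i+2))) = 0 := by
    intro i h1 h2
    have hA1 := hA (i+1) (by omega) (by omega) i (by omega)
    rw [if_neg (by omega), if_neg (by omega), if_pos (by omega)] at hA1
    rw [(show i+1-1 = i by omega)] at hA1
    have hA2 := hA (i+2) (by omega) (by omega) (i+1) (by omega)
    rw [if_neg (by omega), if_neg (by omega), if_pos (by omega)] at hA2
    rw [(show i+2-1 = i+1 by omega), (show i+1-1 = i by omega)] at hA2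
    have hB1 := hB (i+2) (by omega) (by omega) (i+1) (by omega)
    rw [if_pos (show i+1 = i+2-1 by omega), if_neg (by omega), if_pos (by omega)] at hB1
    rw [(show i+2-2 = i by omega), (show i+1-2 = i-1 by omega)] at hB1
    have hz : gco b (i-1) (φ (e i)) = 0 := by
      linear_combination hA1 + 2*hA2 - 2*hB1 + 2*hγ
    exact ⟨hz, by linear_combination hB1/2 - hγ/2 + hz/2⟩
  have hsub : ∀ k, 3 ≤ k → k ≤ n-1 → gco b (k-1) (φ (e k)) = 0 := by
    intro k h1 h2
    by_cases hc : k ≤ n-3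
    · exact (hpair k h1 hc).1
    · have h := (hpair (k-2) (by omega) (by omega)).2
      rw [(show k-2+2 = k by omega), (show k-2+1 = k-1 by omega)] at h
      exact h
  -- superdiagonal
  have hsup1 : ∀ i, 2 ≤ i → i ≤ n-4 →
      gco b (i+1) (φ (e i)) = -3 * gco b n (φ (e 1)) := by
    intro i h1 h2
    have hA1 := hA (i+1) (by omega) (by omega) (i+2) (by omega)
    rw [if_neg (by omega), if_pos (show i+2 = (i+1)+1 ∧ i+1 ≤ n-2 by omega),
        if_pos (by omega)] at hA1
    rw [(show i+1-1 = i by omega), (show i+2-1 = i+1 by omega)] at hA1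
    have hA2 := hA (i+2) (by omega) (by omega) (i+3) (by omega)
    rw [if_neg (by omega), if_pos (show i+3 = (i+2)+1 ∧ i+2 ≤ n-2 by omega),
        if_pos (by omega)] at hA2
    rw [(show i+2-1 = i+1 by omega), (show i+3-1 = i+2 by omega)] at hA2
    have hB1 := hB (i+2) (by omega) (by omega) (i+3) (by omega)
    rw [if_neg (by omega), if_neg (by omega), if_pos (by omega)] at hB1
    rw [(show i+2-2 = i by omega), (show i+3-2 = i+1 by omega)] at hB1
    linear_combination hA1 + 2*hA2 - 2*hB1
  have hβ : gco b n (φ (e 1)) = 0 := by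
    have h1 := hA 3 (by omega) (by omega) 4 (by omega)
    rw [if_neg (by omega), if_pos (by omega), if_pos (by omega)] at h1
    norm_num at h1
    have h2 := hsup1 2 (by omega) (by omega)
    have h3 := hsup1 3 (by omega) (by omega)
    linear_combination -h1/2 - h2/2 + h3
  have hsup : ∀ k, 2 ≤ k → k ≤ n-2 → gco b (k+1) (φ (e k)) = 0 := by
    intro k h1 h2
    by_cases hc : k ≤ n-4
    · have h := hsup1 k h1 hc
      rw [hβ] at h
      linear_combination h
    · have hB1 := hB k (by omega) (by omega) (k+1) (by omega)
      rw [if_neg (by omega), if_neg (by omega), if_pos (by omega)] at hB1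
      rw [(show k+1-2 = k-1 by omega)] at hB1
      have hz : gco b (k-1) (φ (e (k-2))) = 0 := by
        have h := hsup1 (k-2) (by omega) (by omega)
        rw [(show k-2+1 = k-1 by omega), hβ] at h
        linear_combination h
      linear_combination hB1/2 + hz/2
  -- diagonal
  have hdA : ∀ k, 3 ≤ k → k ≤ n-1 →
      2 * gco b k (φ (e k)) = gco b 1 (φ (e 1)) + gco b (k-1) (φ (e (k-1))) := by
    intro k h1 h2
    have h := hA k h1 h2 k (by omega)
    rw [if_pos rfl, if_neg (by omega), if_pos (by omega)] at h
    linear_combination h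
  have hdB : ∀ k, 4 ≤ k → k ≤ n-1 →
      2 * gco b k (φ (e k)) = gco b n (φ (e n)) + gco b (k-2) (φ (e (k-2))) := by
    intro k h1 h2
    have h := hB k h1 h2 k (by omega)
    rw [if_neg (by omega), if_pos rfl, if_pos (by omega)] at h
    linear_combination h
  have hdval : ∀ k, 4 ≤ k → k ≤ n-1 →
      2 * gco b k (φ (e k)) = 3 * gco b 1 (φ (e 1)) - gco b n (φ (e n)) := by
    intro k h1 h2
    have h1' := hdA k (by omega) h2
    have h2' := hdA (k-1) (by omega) (by omega)
    rw [(show k-1-1 = k-2 by omega)] at h2'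
    have h3' := hdB k h1 h2
    linear_combination 2*h1' + h2' - h3'
  have hdiag : ∀ k, 4 ≤ k → k ≤ n-1 → gco b k (φ (e k)) = gco b 1 (φ (e 1)) := by
    intro k h1 h2
    have hv := hdval k h1 h2
    have h45 := hdA 5 (by omega) (by omega)
    norm_num at h45
    have hv4 := hdval 4 (by omega) (by omega)
    have hv5 := hdval 5 (by omega) (by omega)
    linear_combination hv/2 + h45 - hv5 + hv4/2
  -- remaining entries of row n-2 and columns n-2, n-1
  have hrow2 : ∀ j, 3 ≤ j → j ≤ n-4 → gco b j (φ (e (n-2))) = 0 := by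
    intro j h1 h2
    have h := hA (n-2) (by omega) (by omega) j (by omega)
    rw [if_neg (by omega), if_neg (by omega), if_pos (by omega)] at h
    rw [(show n-2-1 = n-3 by omega)] at h
    have hz := (Z2 (n-3) (j-1) (by omega) (by omega) (by omega) (by omega)
      (by omega) (by omega) (by omega)).1
    linear_combination h/2 + hz/2
  have hcolN2 : ∀ k, 4 ≤ k → k ≤ n-4 → gco b (n-2) (φ (e k)) = 0 := by
    intro k h1 h2
    have h := (Z2 (k-2) (n-4) (by omega) (by omega) (by omega) (by omega)
      (by omega) (by omega) (by omega)).2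
    rw [(show k-2+2 = k by omega), (show n-4+2 = n-2 by omega)] at h
    exact h
  have hcolN1 : ∀ k, 4 ≤ k → k ≤ n-3 → gco b (n-1) (φ (e k)) = 0 := by
    intro k h1 h2
    have h := (Z2 (k-2) (n-3) (by omega) (by omega) (by omega) (by omega)
      (by omega) (by omega) (by omega)).2
    rw [(show k-2+2 = k by omega), (show n-3+2 = n-1 by omega)] at h
    exact h
  -- all coefficients of φ(e k) for 4 ≤ k ≤ n-1
  have hkey : ∀ k, 4 ≤ k → k ≤ n-1 → ∀ m, 1 ≤ m → m ≤ n →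
      gco b m (φ (e k)) = if m = k then gco b 1 (φ (e 1)) else 0 := by
    intro k hk1 hk2 m hm1 hm2
    by_cases hdk : m = k
    · rw [if_pos hdk, hdk]; exact hdiag k hk1 hk2
    rw [if_neg hdk]
    rcases eq_or_ne m 1 with h | hm1'
    · rw [h]; exact (Z1 k (by omega) hk2).1
    rcases eq_or_ne m 2 with h | hm2'
    · rw [h]; exact (Z1 k (by omega) hk2).2.1
    rcases eq_or_ne m n with h | hmn
    · rw [h]; exact (Z1 k (by omega) hk2).2.2
    rcases eq_or_ne (m+1) k with h | hsub'
    · have hz := hsub k (by omega) hk2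
      rw [(show k-1 = m by omega)] at hz
      exact hz
    rcases eq_or_ne m (k+1) with h | hsup'
    · rw [h]; exact hsup k (by omega) (by omega)
    by_cases hk3 : k = n-1
    · subst hk3; exact hC m (by omega) (by omega)
    by_cases hk4 : k = n-2
    · subst hk4; exact hrow2 m (by omega) (by omega)
    by_cases hm' : m ≤ n-3
    · exact (Z2 k m (by omega) (by omega) (by omega) (by omega)
        (by omega) (by omega) (by omega)).1
    rcases eq_or_ne m (n-2) with h | h
    · rw [h]; exact hcolN2 k (by omega) (by omega)
    · rw [(show m = n-1 by omega)]; exact hcolN1 k (by omega) (by omega)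
  refine ⟨?_, ?_, ?_⟩
  · intro k hk1 hk2
    have hα : gco b 1 (φ (e 1)) = b.repr (φ (e 1)) ⟨0, by omega⟩ :=
      gco_eq b 1 (φ (e 1)) (by omega)
    rw [← hα]
    apply b.repr.injective
    refine Finsupp.ext fun i => ?_
    obtain ⟨v, hv⟩ := i
    have hLft : b.repr (φ (e k)) ⟨v, hv⟩ = gco b (v+1) (φ (e k)) :=
      (gco_eq b (v+1) (φ (e k)) (by omega)).symm
    rw [hLft, hkey k hk1 hk2 (v+1) (by omega) (by omega), map_smul, Finsupp.smul_apply,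
        he k (by omega) (by omega), Module.Basis.repr_self, Finsupp.single_apply, smul_eq_mul]
    by_cases hik : v + 1 = k
    · rw [if_pos hik, if_pos (Fin.ext (by simp; omega)), mul_one]
    · rw [if_neg hik, if_neg (show ¬ (⟨k-1, by omega⟩ : Fin n) = ⟨v, hv⟩ by
        intro hh; have := congrArg Fin.val hh; simp at this; omega), mul_zero]
  · have h := hE2
    rw [gco_eq b 1 (φ (e 2)) (by omega)] at h
    exact h
  · have h := hγ
    rw [gco_eq b 1 (φ (e n)) (by omega)] at h
    exact h
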